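/- arXiv:2602.11665 — 2 statements merged into one kernel-verified Lean document; each statement's English description precedes it below -/
import Mathlib

section
/- Let f, g : ℝ^{d1} × ℝ^{d2} → ℝ with f being L_{f,0}-Lipschitz, and for each x let y ↦ g(x,y) be μ-strongly convex with unique minimizer y*(x). For λ > 2·L_{f,1}/μ (where ∇f is L_{f,1}-Lipschitz), the function y ↦ f(x,y) + λ·g(x,y) is (λμ/2)-strongly convex with unique minimizer y_λ*(x), and ‖y*(x) − y_λ*(x)‖ ≤ 2·L_{f,0}/(λ·μ). -/
open Set

local notation "⟪" x ", " y "⟫" => @inner ℝ _ _ x y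

lemma weakConvexAux {d1 d2 : ℕ}
    (f : EuclideanSpace ℝ (Fin d1) × EuclideanSpace ℝ (Fin d2) → ℝ)
    (Lf1 : ℝ) (hLf1 : 0 ≤ Lf1)
    (hdf : ContDiff ℝ 1 f)
    (hdfLip : LipschitzWith (Real.toNNReal Lf1) (fun p => fderiv ℝ f p))
    (x : EuclideanSpace ℝ (Fin d1)) :
    ConvexOn ℝ Set.univ (fun y => f (x, y) + Lf1 / 2 * ‖y‖ ^ 2) := by
  refine ⟨convex_univ, fun y _ z _ a b ha hb hab => ?_⟩
  set v := z - y with hv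
  set u : ℝ → EuclideanSpace ℝ (Fin d2) := fun t => y + t • v with hu
  set c : ℝ → EuclideanSpace ℝ (Fin d1) × EuclideanSpace ℝ (Fin d2) := fun t => (x, u t) with hc
  have hud : ∀ t : ℝ, HasDerivAt u v t := by
    intro t
    have := ((hasDerivAt_id' t).smul_const v).const_add y
    rw [one_smul] at this; exact this
  have hcd : ∀ t : ℝ, HasDerivAt c ((0 : EuclideanSpace ℝ (Fin d1)), v) t := by
    intro t
    exact (hasDerivAt_const t x).prodMk (hud t)
  set ψ : ℝ → ℝ := fun t => f (c t) + Lf1 / 2 * ⟪u t, u t⟫ with hψ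
  have hψd : ∀ t : ℝ, HasDerivAt ψ
      (fderiv ℝ f (c t) ((0 : EuclideanSpace ℝ (Fin d1)), v)
        + Lf1 / 2 * (⟪u t, v⟫ + ⟪v, u t⟫)) t := by
    intro t
    exact (((hdf.differentiable one_ne_zero (c t)).hasFDerivAt).comp_hasDerivAt t (hcd t)).add
      (((hud t).inner ℝ (hud t)).const_mul (Lf1 / 2))
  have hderiv : ∀ t : ℝ, deriv ψ t = fderiv ℝ f (c t) ((0 : EuclideanSpace ℝ (Fin d1)), v)
        + Lf1 / 2 * (⟪u t, v⟫ + ⟪v, u t⟫) := fun t => (hψd t).deriv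
  have hmono : Monotone (deriv ψ) := by
    intro t s hts
    rw [hderiv, hderiv]
    have h1 : |fderiv ℝ f (c s) ((0 : EuclideanSpace ℝ (Fin d1)), v)
        - fderiv ℝ f (c t) ((0 : EuclideanSpace ℝ (Fin d1)), v)| ≤ Lf1 * ((s - t) * ‖v‖) * ‖v‖ := by
      have hA : fderiv ℝ f (c s) ((0 : EuclideanSpace ℝ (Fin d1)), v)
          - fderiv ℝ f (c t) ((0 : EuclideanSpace ℝ (Fin d1)), v)
          = (fderiv ℝ f (c s) - fderiv ℝ f (c t)) ((0 : EuclideanSpace ℝ (Fin d1)), v) := rfl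
      rw [hA]
      calc |(fderiv ℝ f (c s) - fderiv ℝ f (c t)) ((0 : EuclideanSpace ℝ (Fin d1)), v)|
          ≤ ‖fderiv ℝ f (c s) - fderiv ℝ f (c t)‖ * ‖((0 : EuclideanSpace ℝ (Fin d1)), v)‖ :=
            (fderiv ℝ f (c s) - fderiv ℝ f (c t)).le_opNorm _
        _ ≤ (Lf1 * ((s - t) * ‖v‖)) * ‖v‖ := by
            have hnv : ‖((0 : EuclideanSpace ℝ (Fin d1)), v)‖ = ‖v‖ := by
              simp [Prod.norm_def]
            rw [hnv]
            have h3 := hdfLip.dist_le_mul (c s) (c t)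
            rw [Real.coe_toNNReal _ hLf1] at h3
            have husub : u s - u t = (s - t) • v := by
              show (y + s • v) - (y + t • v) = (s - t) • v
              rw [sub_smul]; abel
            have h4 : dist (c s) (c t) = (s - t) * ‖v‖ := by
              rw [Prod.dist_eq]
              change max (dist x x) (dist (u s) (u t)) = _
              simp only [dist_self]
              rw [max_eq_right dist_nonneg, dist_eq_norm, husub, norm_smul,
                Real.norm_eq_abs, abs_of_nonneg (sub_nonneg.2 hts)]
            have h5 : ‖fderiv ℝ f (c s) - fderiv ℝ f (c t)‖ ≤ Lf1 * ((s - t) * ‖v‖) := by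
              rw [← dist_eq_norm, ← h4]; exact h3
            exact mul_le_mul_of_nonneg_right h5 (norm_nonneg v)
    have husub : u s - u t = (s - t) • v := by
      show (y + s • v) - (y + t • v) = (s - t) • v
      rw [sub_smul]; abel
    have h2 : ⟪u s, v⟫ - ⟪u t, v⟫ = (s - t) * ‖v‖ ^ 2 := by
      rw [← inner_sub_left, husub, real_inner_smul_left, real_inner_self_eq_norm_sq]
    have h3 : ⟪v, u s⟫ - ⟪v, u t⟫ = (s - t) * ‖v‖ ^ 2 := by
      rw [real_inner_comm (u s) v, real_inner_comm (u t) v]; exact h2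
    have := abs_le.1 h1
    nlinarith [this.1, this.2, sq_nonneg ‖v‖]
  have hψc : ConvexOn ℝ Set.univ ψ :=
    Monotone.convexOn_univ_of_deriv (fun t => (hψd t).differentiableAt) hmono
  have key := hψc.2 (mem_univ (0:ℝ)) (mem_univ (1:ℝ)) ha hb hab
  have hu0 : u 0 = y := by show y + (0:ℝ) • v = y; simp
  have hu1 : u 1 = z := by show y + (1:ℝ) • v = z; rw [one_smul, hv]; abel
  have e0 : ψ 0 = f (x, y) + Lf1 / 2 * ‖y‖ ^ 2 := by
    show f (x, u 0) + Lf1 / 2 * ⟪u 0, u 0⟫ = _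
    rw [hu0, real_inner_self_eq_norm_sq]
  have e1 : ψ 1 = f (x, z) + Lf1 / 2 * ‖z‖ ^ 2 := by
    show f (x, u 1) + Lf1 / 2 * ⟪u 1, u 1⟫ = _
    rw [hu1, real_inner_self_eq_norm_sq]
  have eb : ψ (a • (0:ℝ) + b • 1) = f (x, a • y + b • z) + Lf1 / 2 * ‖a • y + b • z‖ ^ 2 := by
    have hpt : u (a • (0:ℝ) + b • 1) = a • y + b • z := by
      simp only [hu, hv, smul_zero, zero_add, smul_eq_mul, mul_one]
      have ha' : a = 1 - b := by linarith
      rw [ha', smul_sub]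
      module
    show f (x, u (a • (0:ℝ) + b • 1)) + Lf1 / 2 * ⟪u (a • (0:ℝ) + b • 1), u (a • (0:ℝ) + b • 1)⟫ = _
    rw [hpt, real_inner_self_eq_norm_sq]
  rw [eb, e0, e1] at key
  simpa using key

lemma aux_limit {K M : ℝ} (h : ∀ a : ℝ, 0 ≤ a → a < 1 → a * K ≤ M) : K ≤ M := by
  have hM : 0 ≤ M := by simpa using h 0 le_rfl one_pos
  by_contra hc
  push_neg at hc
  have hKpos : 0 < K := lt_of_le_of_lt hM hc
  have ha0 : 0 ≤ (M / K + 1) / 2 := by positivity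
  have ha1 : (M / K + 1) / 2 < 1 := by
    have : M / K < 1 := (div_lt_one hKpos).2 hc
    linarith
  have := h _ ha0 ha1
  have hMK : M / K * K = M := div_mul_cancel₀ _ hKpos.ne'
  nlinarith


theorem stmt1 {d1 d2 : ℕ}
    (f g : EuclideanSpace ℝ (Fin d1) × EuclideanSpace ℝ (Fin d2) → ℝ)
    (μ Lf0 Lf1 lam : ℝ)
    (hμ : 0 < μ) (hLf0 : 0 ≤ Lf0) (hLf1 : 0 ≤ Lf1)
    (hfLip : LipschitzWith (Real.toNNReal Lf0) f)
    (hdf : ContDiff ℝ 1 f)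
    (hdfLip : LipschitzWith (Real.toNNReal Lf1) (fun p => fderiv ℝ f p))
    (hgdiff : ∀ x, Differentiable ℝ (fun y => g (x, y)))
    (hconv : ∀ x, StrongConvexOn Set.univ μ (fun y => g (x, y)))
    (hlam : lam > 2 * Lf1 / μ)
    (ystar : EuclideanSpace ℝ (Fin d1) → EuclideanSpace ℝ (Fin d2))
    (hystar : ∀ x, IsMinOn (fun y => g (x, y)) Set.univ (ystar x))
    (x : EuclideanSpace ℝ (Fin d1)) :
    StrongConvexOn Set.univ (lam * μ / 2) (fun y => f (x, y) + lam * g (x, y)) ∧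
    (∃! yl : EuclideanSpace ℝ (Fin d2),
      IsMinOn (fun y => f (x, y) + lam * g (x, y)) Set.univ yl) ∧
    (∀ yl : EuclideanSpace ℝ (Fin d2),
      IsMinOn (fun y => f (x, y) + lam * g (x, y)) Set.univ yl →
        ‖ystar x - yl‖ ≤ 2 * Lf0 / (lam * μ)) := by
  have hlam0 : 0 < lam := lt_of_le_of_lt (by positivity) hlam
  have hlm : 2 * Lf1 < lam * μ := by
    rw [gt_iff_lt, div_lt_iff₀ hμ] at hlam; linarith
  have hlmpos : 0 < lam * μ := mul_pos hlam0 hμ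
  -- Part 1
  have hA : StrongConvexOn Set.univ (-Lf1) (fun y => f (x, y)) := by
    rw [strongConvexOn_iff_convex]
    have heq : (fun y : EuclideanSpace ℝ (Fin d2) => f (x, y) - -Lf1 / 2 * ‖y‖ ^ 2)
        = fun y => f (x, y) + Lf1 / 2 * ‖y‖ ^ 2 := by funext y; ring
    rw [heq]; exact weakConvexAux f Lf1 hLf1 hdf hdfLip x
  have hB : StrongConvexOn Set.univ (lam * μ) (fun y => lam * g (x, y)) := by
    rw [strongConvexOn_iff_convex]
    have h1 := (strongConvexOn_iff_convex.1 (hconv x)).smul hlam0.le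
    have heq : (fun y : EuclideanSpace ℝ (Fin d2) => lam * g (x, y) - lam * μ / 2 * ‖y‖ ^ 2)
        = lam • (fun y => g (x, y) - μ / 2 * ‖y‖ ^ 2 : EuclideanSpace ℝ (Fin d2) → ℝ) := by
      funext y; simp only [Pi.smul_apply, smul_eq_mul]; ring
    rw [heq]; exact h1
  have hpart1 : StrongConvexOn Set.univ (lam * μ / 2) (fun y => f (x, y) + lam * g (x, y)) := by
    have hsum := hA.add hB
    exact hsum.mono fun r => by
      simp only [Pi.add_apply]
      nlinarith [sq_nonneg r]
  set ys := ystar x with hys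
  -- Lipschitz of f in y
  have hfy : ∀ y y' : EuclideanSpace ℝ (Fin d2), |f (x, y) - f (x, y')| ≤ Lf0 * ‖y - y'‖ := by
    intro y y'
    have h1 := hfLip.dist_le_mul (x, y) (x, y')
    rw [Real.coe_toNNReal _ hLf0, Real.dist_eq] at h1
    have hd : dist ((x, y) : EuclideanSpace ℝ (Fin d1) × EuclideanSpace ℝ (Fin d2)) (x, y')
        = ‖y - y'‖ := by
      rw [Prod.dist_eq]
      simp only [dist_self]
      rw [max_eq_right dist_nonneg, dist_eq_norm]
    rwa [hd] at h1
  -- lower bound for g via strong convexity (quarter version)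
  have hglb : ∀ y : EuclideanSpace ℝ (Fin d2), g (x, ys) + μ / 4 * ‖y - ys‖ ^ 2 ≤ g (x, y) := by
    intro y
    have h2 := (hconv x).2 (mem_univ ys) (mem_univ y)
      (by norm_num : (0:ℝ) ≤ 1/2) (by norm_num : (0:ℝ) ≤ 1/2) (by norm_num)
    have h3 := isMinOn_iff.1 (hystar x) ((1/2 : ℝ) • ys + (1/2 : ℝ) • y) (mem_univ _)
    simp only [smul_eq_mul] at h2
    have hrev : ‖ys - y‖ = ‖y - ys‖ := norm_sub_rev _ _
    rw [hrev] at h2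
    nlinarith [h2, h3]
  -- coercivity lower bound
  have hco : ∀ y : EuclideanSpace ℝ (Fin d2),
      f (x, ys) + lam * g (x, ys) + (lam * μ / 4 * ‖y - ys‖ ^ 2 - Lf0 * ‖y - ys‖)
        ≤ f (x, y) + lam * g (x, y) := by
    intro y
    have h1 := (abs_le.1 (hfy y ys)).1
    have h2 := mul_le_mul_of_nonneg_left (hglb y) hlam0.le
    nlinarith [h1, h2]
  set R : ℝ := (4 * Lf0 + lam * μ) / (lam * μ) with hR
  have hRpos : 0 < R := by positivity
  have hRid : lam * μ * R = 4 * Lf0 + lam * μ := by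
    rw [hR]; field_simp
  have houtside : ∀ y : EuclideanSpace ℝ (Fin d2), R ≤ ‖y - ys‖ →
      f (x, ys) + lam * g (x, ys) ≤ f (x, y) + lam * g (x, y) := by
    intro y hy
    have h1 := hco y
    have hd0 : (0:ℝ) ≤ ‖y - ys‖ := norm_nonneg _
    nlinarith [mul_le_mul_of_nonneg_right hy hd0, hRid, h1, hLf0, hlmpos.le]
  have hcont : Continuous (fun y => f (x, y) + lam * g (x, y)) := by
    exact ((hdf.continuous.comp (Continuous.prodMk_right x)).add
      (continuous_const.mul (hgdiff x).continuous))
  obtain ⟨y0, hy0mem, hy0⟩ := (isCompact_closedBall ys R).exists_isMinOn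
    ⟨ys, Metric.mem_closedBall_self hRpos.le⟩ hcont.continuousOn
  have hglobal : IsMinOn (fun y => f (x, y) + lam * g (x, y)) Set.univ y0 := by
    rw [isMinOn_iff]
    intro y _
    by_cases hy : y ∈ Metric.closedBall ys R
    · exact isMinOn_iff.1 hy0 y hy
    · have hout : R ≤ ‖y - ys‖ := by
        rw [Metric.mem_closedBall, not_le] at hy
        rw [← dist_eq_norm]
        exact hy.le
      exact le_trans (isMinOn_iff.1 hy0 ys (Metric.mem_closedBall_self hRpos.le))
        (houtside y hout)
  have hstrict : StrictConvexOn ℝ Set.univ (fun y => f (x, y) + lam * g (x, y)) :=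
    hpart1.strictConvexOn (by positivity)
  refine ⟨hpart1, ⟨y0, hglobal, fun y' hy' =>
    hstrict.eq_of_isMinOn hy' hglobal (mem_univ _) (mem_univ _)⟩, ?_⟩
  -- Part 3
  intro yl hyl
  have hd0 : (0:ℝ) ≤ ‖ys - yl‖ := norm_nonneg _
  have hsc : μ / 2 * ‖ys - yl‖ ^ 2 ≤ g (x, yl) - g (x, ys) := by
    apply aux_limit
    intro a ha0 ha1
    have hb0 : (0:ℝ) ≤ 1 - a := by linarith
    have hbpos : (0:ℝ) < 1 - a := by linarith
    have hcc := (hconv x).2 (mem_univ ys) (mem_univ yl) ha0 hb0 (by ring)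
    have hm := isMinOn_iff.1 (hystar x) (a • ys + (1 - a) • yl) (mem_univ _)
    simp only [smul_eq_mul] at hcc
    have key : a * (μ / 2 * ‖ys - yl‖ ^ 2) * (1 - a) ≤ (g (x, yl) - g (x, ys)) * (1 - a) := by
      nlinarith [hcc, hm]
    exact le_of_mul_le_mul_right key hbpos
  have hminle : f (x, yl) + lam * g (x, yl) ≤ f (x, ys) + lam * g (x, ys) :=
    isMinOn_iff.1 hyl ys (mem_univ _)
  have hlip := (abs_le.1 (hfy ys yl)).2
  rw [le_div_iff₀ hlmpos]
  rcases hd0.eq_or_lt.imp Eq.symm id with hd | hd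
  · rw [hd, zero_mul]; positivity
  · nlinarith [mul_le_mul_of_nonneg_left hsc hlam0.le, hlip, hminle, hd]
end

section
/- Consider the 1-dimensional family f_t(x,y) = c·e^{−y²} and g_t(x,y) = (μ/2)(y − (−1)^t x)² on x ∈ [−1,1], y ∈ ℝ. Then y_t*(x) = (−1)^t x, the composed objective F_t(x) = c·e^{−x²} is independent of t, so the function-variation V_T = Σ_{t=2}^T sup_{x∈[−1,1]} |F_{t−1}(x) − F_t(x)| = 0, while the solution drift H_{2,T} = Σ_{t=2}^T sup_{x∈[−1,1]} |y_{t−1}*(x) − y_t*(x)|² = 4T − 4. -/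
lemma sq_neg_one_pow (k : ℕ) (x : ℝ) : ((-1 : ℝ) ^ k * x) ^ 2 = x ^ 2 := by
  rw [mul_pow, ← pow_mul, mul_comm k 2, pow_mul]
  norm_num

instance : Nonempty (Set.Icc (-1 : ℝ) 1) := ⟨⟨0, by norm_num⟩⟩

theorem stmt13 (μ c : ℝ) (hμ : 0 < μ) (hc : 0 < c) (T : ℕ) (hT : 1 ≤ T) :
    (∀ (t : ℕ) (x : ℝ),
      IsMinOn (fun y : ℝ => μ / 2 * (y - (-1 : ℝ) ^ t * x) ^ 2) Set.univ ((-1 : ℝ) ^ t * x)) ∧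
    (∀ (t : ℕ) (x : ℝ), c * Real.exp (-((-1 : ℝ) ^ t * x) ^ 2) = c * Real.exp (-x ^ 2)) ∧
    (∑ t ∈ Finset.Icc 2 T, ⨆ x : Set.Icc (-1 : ℝ) 1,
        |c * Real.exp (-((-1 : ℝ) ^ (t - 1) * (x : ℝ)) ^ 2) -
          c * Real.exp (-((-1 : ℝ) ^ t * (x : ℝ)) ^ 2)|) = 0 ∧
    (∑ t ∈ Finset.Icc 2 T, ⨆ x : Set.Icc (-1 : ℝ) 1,
        |(-1 : ℝ) ^ (t - 1) * (x : ℝ) - (-1 : ℝ) ^ t * (x : ℝ)| ^ 2) = 4 * T - 4 := by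
  refine ⟨?_, ?_, ?_, ?_⟩
  · intro t x
    intro y _
    simp only [Set.mem_setOf_eq]
    have : (0:ℝ) ≤ μ / 2 * (y - (-1 : ℝ) ^ t * x) ^ 2 :=
      mul_nonneg (by linarith) (sq_nonneg _)
    simpa using this
  · intro t x
    rw [sq_neg_one_pow]
  · refine Finset.sum_eq_zero fun t _ => ?_
    have : ∀ x : Set.Icc (-1 : ℝ) 1,
        |c * Real.exp (-((-1 : ℝ) ^ (t - 1) * (x : ℝ)) ^ 2) -
          c * Real.exp (-((-1 : ℝ) ^ t * (x : ℝ)) ^ 2)| = 0 := by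
      intro x
      rw [sq_neg_one_pow, sq_neg_one_pow, sub_self, abs_zero]
    simp only [this, ciSup_const]
  · have key : ∀ t ∈ Finset.Icc 2 T,
        (⨆ x : Set.Icc (-1 : ℝ) 1,
          |(-1 : ℝ) ^ (t - 1) * (x : ℝ) - (-1 : ℝ) ^ t * (x : ℝ)| ^ 2) = 4 := by
      intro t ht
      have ht2 : 2 ≤ t := (Finset.mem_Icc.mp ht).1
      have hpow : ((-1 : ℝ) ^ (t - 1)) = -(-1 : ℝ) ^ t := by
        conv_rhs => rw [show t = (t - 1) + 1 by omega]
        rw [pow_succ]; ring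
      have hval : ∀ x : Set.Icc (-1 : ℝ) 1,
          |(-1 : ℝ) ^ (t - 1) * (x : ℝ) - (-1 : ℝ) ^ t * (x : ℝ)| ^ 2 = 4 * (x : ℝ) ^ 2 := by
        intro x
        rw [sq_abs, hpow]
        have := sq_neg_one_pow t (x : ℝ)
        nlinarith [this]
      simp only [hval]
      apply le_antisymm
      · apply ciSup_le
        intro x
        have h1 : (-1 : ℝ) ≤ (x : ℝ) := x.2.1
        have h2 : (x : ℝ) ≤ 1 := x.2.2
        nlinarith
      · refine le_ciSup_of_le ⟨4, ?_⟩ (⟨1, by norm_num⟩ : Set.Icc (-1:ℝ) 1) (by norm_num)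
        rintro y ⟨x, rfl⟩
        have h1 : (-1 : ℝ) ≤ (x : ℝ) := x.2.1
        have h2 : (x : ℝ) ≤ 1 := x.2.2
        show 4 * (x : ℝ) ^ 2 ≤ 4
        nlinarith
    rw [Finset.sum_congr rfl key, Finset.sum_const, Nat.card_Icc]
    have : T + 1 - 2 = T - 1 := by omega
    rw [this, nsmul_eq_mul, Nat.cast_sub hT]
    push_cast
    ring
end
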